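/- Let p1, p2, p3 be affinely independent points of ℝ³ and let a, b ∈ ℝ³ with a not lying in the plane through p1, p2, p3 (i.e. a ∉ affineSpan ℝ {p1,p2,p3}). If the open segment from a to b meets the intrinsic interior of the triangle convexHull ℝ {p1, p2, p3}, then a and b lie strictly on opposite sides of the plane through p1, p2, p3, i.e. (affineSpan ℝ {p1,p2,p3}).SOppSide a b. -/

import Mathlib

/-- The basic piercing fact: if the open segment from `a` to `b` meets the relative
interior of the triangle on three affinely independent points `p₁, p₂, p₃` of ℝ³, and `a`
does not lie in the plane through `p₁, p₂, p₃`, then `a` and `b` lie strictly on opposite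
sides of that plane. -/
theorem sOppSide_of_openSegment_inter_intrinsicInterior
    (p₁ p₂ p₃ a b : EuclideanSpace ℝ (Fin 3))
    (h : AffineIndependent ℝ ![p₁, p₂, p₃])
    (ha : a ∉ affineSpan ℝ ({p₁, p₂, p₃} : Set (EuclideanSpace ℝ (Fin 3))))
    (hmeet : (openSegment ℝ a b ∩
      intrinsicInterior ℝ (convexHull ℝ ({p₁, p₂, p₃} : Set (EuclideanSpace ℝ (Fin 3))))) ≠ ∅) :
    (affineSpan ℝ ({p₁, p₂, p₃} : Set (EuclideanSpace ℝ (Fin 3)))).SOppSide a b := by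
  obtain ⟨x, hxo, hxi⟩ := Set.nonempty_iff_ne_empty.2 hmeet
  set s := affineSpan ℝ ({p₁, p₂, p₃} : Set (EuclideanSpace ℝ (Fin 3))) with hs
  have hxs : x ∈ s := (convexHull_subset_affineSpan _) (intrinsicInterior_subset hxi)
  have hxo' := hxo
  obtain ⟨u, v, hu, hv, huv, hx⟩ := hxo
  have hb : b ∉ s := by
    intro hb
    apply ha
    have hv1 : v = 1 - u := by linarith
    have : a = u⁻¹ • (x - b) + b := by
      rw [← hx, hv1]
      match_scalars <;> field_simp <;> ring
    rw [this]
    have := s.smul_vsub_vadd_mem u⁻¹ hxs hb hb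
    simpa using this
  refine ⟨?_, ha, hb⟩
  exact AffineSubspace.wOppSide_iff_exists_wbtw.2 ⟨x, hxs,
    mem_segment_iff_wbtw.1 (openSegment_subset_segment ℝ a b hxo')⟩
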